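/- Let D be a non-trivial (v,b,r,k,1)-BIBD (i.e. λ = 1). Then any two distinct non-adjacent vertices of the flag-graph Γ₁(D) have at most one common neighbour. -/

import Mathlib

/-- A `(v,b,r,k,lam)`-balanced incomplete block design: a finite set of `v` points and a
family of `b` distinct blocks, each block a `k`-element subset of the points with
`1 < k < v`, such that every point lies in exactly `r` blocks and every pair of distinct
points is contained in exactly `lam` blocks (all parameters positive). -/
structure BIBD (v b r k lam : ℕ) where
  P : Type
  [fintypeP : Fintype P]
  [decEqP : DecidableEq P]
  blocks : Finset (Finset P)
  card_points : Fintype.card P = v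
  card_blocks : blocks.card = b
  block_size : ∀ c ∈ blocks, c.card = k
  one_lt_k : 1 < k
  k_lt_v : k < v
  lam_pos : 0 < lam
  point_deg : ∀ p : P, (blocks.filter (fun c => p ∈ c)).card = r
  pair_deg : ∀ p q : P, p ≠ q → (blocks.filter (fun c => p ∈ c ∧ q ∈ c)).card = lam

attribute [instance] BIBD.fintypeP BIBD.decEqP

variable {v b r k lam : ℕ}

/-- A flag of a BIBD: an incident point-block pair `(p, c)` with `p ∈ c`. -/
def BIBD.Flag (D : BIBD v b r k lam) : Type :=
  {pc : D.P × Finset D.P // pc.2 ∈ D.blocks ∧ pc.1 ∈ pc.2}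

instance (D : BIBD v b r k lam) : Fintype D.Flag :=
  inferInstanceAs (Fintype {pc : D.P × Finset D.P // pc.2 ∈ D.blocks ∧ pc.1 ∈ pc.2})

instance (D : BIBD v b r k lam) : DecidableEq D.Flag :=
  inferInstanceAs (DecidableEq {pc : D.P × Finset D.P // pc.2 ∈ D.blocks ∧ pc.1 ∈ pc.2})

/-- The flag-graph `Γ₁(D)`: vertices are the flags of `D`; two distinct flags `(p,c)` and
`(q,d)` are adjacent iff `p = q` or `c = d`. -/
def BIBD.Gamma1 (D : BIBD v b r k lam) : SimpleGraph D.Flag where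
  Adj x y := x ≠ y ∧ (x.1.1 = y.1.1 ∨ x.1.2 = y.1.2)
  symm := ⟨fun _ _ h => ⟨h.1.symm, h.2.imp Eq.symm Eq.symm⟩⟩
  loopless := ⟨fun _ h => h.1 rfl⟩

instance (D : BIBD v b r k lam) : DecidableRel D.Gamma1.Adj :=
  fun x y => inferInstanceAs (Decidable (x ≠ y ∧ (x.1.1 = y.1.1 ∨ x.1.2 = y.1.2)))

/-- In the flag-graph of a non-trivial BIBD with `λ = 1`, any two distinct non-adjacent
vertices have at most one common neighbour. -/
theorem flagGraph_nonadjacent_common_neighbours_lambda_one (D : BIBD v b r k 1)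
    (hnt : 1 < v - k) (x y : D.Flag) (hne : x ≠ y) (hnadj : ¬ D.Gamma1.Adj x y) :
    (D.Gamma1.neighborFinset x ∩ D.Gamma1.neighborFinset y).card ≤ 1 := by
  have hpq : x.1.1 ≠ y.1.1 := fun h => hnadj ⟨hne, Or.inl h⟩
  have hcd : x.1.2 ≠ y.1.2 := fun h => hnadj ⟨hne, Or.inr h⟩
  rw [Finset.card_le_one]
  intro z hz w hw
  simp only [Finset.mem_inter, SimpleGraph.mem_neighborFinset] at hz hw
  simp only [BIBD.Gamma1] at hz hw
  obtain ⟨⟨_, hz1⟩, _, hz2⟩ := hz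
  obtain ⟨⟨_, hw1⟩, _, hw2⟩ := hw
  have key : ∀ u : D.Flag, (x.1.1 = u.1.1 ∨ x.1.2 = u.1.2) →
      (y.1.1 = u.1.1 ∨ y.1.2 = u.1.2) →
      u.1 = (x.1.1, y.1.2) ∨ u.1 = (y.1.1, x.1.2) := by
    intro u h1 h2
    rcases h1 with h1 | h1 <;> rcases h2 with h2 | h2
    · exact absurd (h1.trans h2.symm) hpq
    · exact Or.inl (Prod.ext h1.symm h2.symm)
    · exact Or.inr (Prod.ext h2.symm h1.symm)
    · exact absurd (h1.trans h2.symm) hcd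
  have both : ¬ (x.1.1 ∈ y.1.2 ∧ y.1.1 ∈ x.1.2) := by
    rintro ⟨hpd, hqc⟩
    have h1 := D.pair_deg x.1.1 y.1.1 hpq
    have hsub : ({x.1.2, y.1.2} : Finset (Finset D.P)) ⊆
        D.blocks.filter (fun e => x.1.1 ∈ e ∧ y.1.1 ∈ e) := by
      intro e he
      simp only [Finset.mem_insert, Finset.mem_singleton] at he
      rcases he with rfl | rfl
      · exact Finset.mem_filter.mpr ⟨x.2.1, x.2.2, hqc⟩
      · exact Finset.mem_filter.mpr ⟨y.2.1, hpd, y.2.2⟩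
    have hle := Finset.card_le_card hsub
    rw [Finset.card_pair hcd, h1] at hle
    omega
  rcases key z hz1 hz2 with hz' | hz' <;> rcases key w hw1 hw2 with hw' | hw'
  · exact Subtype.ext (hz'.trans hw'.symm)
  · refine absurd ⟨?_, ?_⟩ both
    · have h := z.2.2; rw [hz'] at h; exact h
    · have h := w.2.2; rw [hw'] at h; exact h
  · refine absurd ⟨?_, ?_⟩ both
    · have h := w.2.2; rw [hw'] at h; exact h
    · have h := z.2.2; rw [hz'] at h; exact h
  · exact Subtype.ext (hz'.trans hw'.symm)
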